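/- Let Γ = (V,E) be a reduced finite simple graph which contains no triangles and no cycles of length six, and assume additionally that there are no vertices u,v ∈ V with N(u) strictly contained in N(v). Then Aut^π(Γ) = Aut(Γ²). -/

import Mathlib

open SimpleGraph

/-- A graph is reduced (vertex determining) if distinct vertices have distinct
open neighborhoods. -/
def Reduced {V : Type*} (G : SimpleGraph V) : Prop :=
  ∀ u v : V, G.neighborSet u = G.neighborSet v → u = v

/-- The group of two-fold projections of a graph: permutations mapping every
open neighborhood onto some open neighborhood. -/
def autPi {V : Type*} [Fintype V] (G : SimpleGraph V) : Subgroup (Equiv.Perm V) where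
  carrier := {π : Equiv.Perm V | ∀ v : V, ∃ w : V, π '' G.neighborSet v = G.neighborSet w}
  one_mem' := by
    intro v
    exact ⟨v, by simp⟩
  mul_mem' := by
    intro a b ha hb v
    obtain ⟨w, hw⟩ := hb v
    obtain ⟨u, hu⟩ := ha w
    refine ⟨u, ?_⟩
    rw [Equiv.Perm.coe_mul, Set.image_comp, hw, hu]
  inv_mem' := by
    intro a ha v
    have hfin : (Set.range G.neighborSet).Finite := Set.finite_range _
    have hmaps : Set.MapsTo (Set.image ⇑a) (Set.range G.neighborSet)
        (Set.range G.neighborSet) := by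
      rintro s ⟨u, rfl⟩
      obtain ⟨w, hw⟩ := ha u
      exact ⟨w, hw.symm⟩
    have hinj : Set.InjOn (Set.image ⇑a) (Set.range G.neighborSet) :=
      (Set.image_injective.mpr a.injective).injOn
    have hbij := (hfin.injOn_iff_bijOn_of_mapsTo hmaps).mp hinj
    obtain ⟨s, hs, hsv⟩ := hbij.surjOn ⟨v, rfl⟩
    obtain ⟨w, rfl⟩ := hs
    refine ⟨w, ?_⟩
    have : (⇑a⁻¹) '' ((⇑a) '' G.neighborSet w) = G.neighborSet w := by
      rw [← Set.image_comp]
      simp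
    rw [← this, hsv]

/-- The automorphism group of a graph, as a subgroup of the permutations of its vertices. -/
def autG {V : Type*} [Fintype V] (G : SimpleGraph V) : Subgroup (Equiv.Perm V) where
  carrier := {π : Equiv.Perm V | ∀ v w : V, G.Adj (π v) (π w) ↔ G.Adj v w}
  one_mem' := by intro v w; rfl
  mul_mem' := by
    intro a b ha hb v w
    rw [Equiv.Perm.coe_mul, Function.comp_apply, Function.comp_apply, ha, hb]
  inv_mem' := by
    intro a ha v w
    conv_rhs => rw [← (show a (a⁻¹ v) = v from a.apply_symm_apply v), ← (show a (a⁻¹ w) = w from a.apply_symm_apply w)]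
    rw [ha]

/-- The square of a graph: distinct vertices are adjacent iff they have a common neighbor. -/
def square {V : Type*} (G : SimpleGraph V) : SimpleGraph V where
  Adj v w := v ≠ w ∧ ∃ u, G.Adj v u ∧ G.Adj u w
  symm := ⟨fun v w h => ⟨h.1.symm, h.2.choose, h.2.choose_spec.2.symm, h.2.choose_spec.1.symm⟩⟩
  loopless := ⟨fun v h => h.1 rfl⟩

/-- If a reduced graph Γ has no triangles, no cycles of length six, and no vertices
u, v with N(u) ⊊ N(v), then Aut^π(Γ) = Aut(Γ²). -/
lemma noTri {V : Type*} {G : SimpleGraph V} (htri : G.CliqueFree 3) {a b c : V}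
    (h1 : G.Adj a b) (h2 : G.Adj a c) (h3 : G.Adj b c) : False := by
  classical
  exact htri {a,b,c} (is3Clique_triple_iff.mpr ⟨h1,h2,h3⟩)

lemma noSix {V : Type*} {G : SimpleGraph V}
    (hsix : ¬ ∃ (v : V) (c : G.Walk v v), c.IsCycle ∧ c.length = 6)
    {a b c d e f : V}
    (hab : G.Adj a b) (hbc : G.Adj b c) (hcd : G.Adj c d) (hde : G.Adj d e)
    (hef : G.Adj e f) (hfa : G.Adj f a)
    (hac : a ≠ c) (had : a ≠ d) (hae : a ≠ e) (hbd : b ≠ d) (hbe : b ≠ e)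
    (hbf : b ≠ f) (hce : c ≠ e) (hcf : c ≠ f) (hdf : d ≠ f) : False := by
  apply hsix
  refine ⟨a, .cons hab (.cons hbc (.cons hcd (.cons hde (.cons hef (.cons hfa .nil))))), ?_, by simp⟩
  have h1 := hab.ne; have h2 := hbc.ne; have h3 := hcd.ne; have h4 := hde.ne
  have h5 := hef.ne; have h6 := hfa.ne
  refine ⟨⟨⟨?_⟩, by simp⟩, ?_⟩
  · simp [Walk.edges, Sym2.eq_iff]
    aesop
  · simp [Walk.support]
    aesop

lemma helly {V : Type*} (G : SimpleGraph V)
    (htri : G.CliqueFree 3)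
    (hsix : ¬ ∃ (v : V) (c : G.Walk v v), c.IsCycle ∧ c.length = 6)
    (hiso : ∀ x : V, ∃ y, G.Adj x y) :
    ∀ (n : ℕ) (S : Finset V), S.card = n → S.Nonempty →
      (∀ x ∈ S, ∀ y ∈ S, x ≠ y → (square G).Adj x y) →
      ∃ u, ∀ x ∈ S, G.Adj u x := by
  classical
  intro n
  induction n using Nat.strong_induction_on with
  | _ n ih =>
  intro S hcard hne hclq
  rcases Nat.lt_or_ge n 3 with hn3 | hn3
  · -- card ≤ 2
    interval_cases n
    · simp [Finset.card_eq_zero] at hcard; simp [hcard] at hne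
    · obtain ⟨x, rfl⟩ := Finset.card_eq_one.mp hcard
      obtain ⟨y, hy⟩ := hiso x
      exact ⟨y, by simpa using hy.symm⟩
    · obtain ⟨x, y, hxy, rfl⟩ := Finset.card_eq_two.mp hcard
      obtain ⟨-, u, hxu, huy⟩ := hclq x (by simp) y (by simp) hxy
      refine ⟨u, ?_⟩
      intro z hz
      rcases Finset.mem_insert.mp hz with rfl | hz
      · exact hxu.symm
      · rw [Finset.mem_singleton.mp hz]; exact huy
  · -- card ≥ 3
    obtain ⟨x1, hx1⟩ := hne
    have h2 : (S.erase x1).Nonempty := by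
      rw [← Finset.card_pos, Finset.card_erase_of_mem hx1]; omega
    obtain ⟨x2, hx2⟩ := h2
    have hx2S : x2 ∈ S := Finset.mem_of_mem_erase hx2
    have hx12 : x1 ≠ x2 := fun h => (Finset.ne_of_mem_erase hx2) h.symm
    have h3 : ((S.erase x1).erase x2).Nonempty := by
      rw [← Finset.card_pos, Finset.card_erase_of_mem hx2, Finset.card_erase_of_mem hx1]; omega
    obtain ⟨y, hy⟩ := h3
    have hyS : y ∈ S := Finset.mem_of_mem_erase (Finset.mem_of_mem_erase hy)
    have hy1 : y ≠ x1 := Finset.ne_of_mem_erase (Finset.mem_of_mem_erase hy)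
    have hy2 : y ≠ x2 := Finset.ne_of_mem_erase hy
    have clq_erase : ∀ z ∈ S, ∀ x ∈ S.erase z, ∀ y' ∈ S.erase z, x ≠ y' → (square G).Adj x y' :=
      fun z _ x hx y' hy' h => hclq x (Finset.mem_of_mem_erase hx) y' (Finset.mem_of_mem_erase hy') h
    have hcard1 : (S.erase x1).card = n - 1 := by rw [Finset.card_erase_of_mem hx1, hcard]
    have hcard2 : (S.erase x2).card = n - 1 := by rw [Finset.card_erase_of_mem hx2S, hcard]
    obtain ⟨u1, hu1⟩ := ih (n-1) (by omega) (S.erase x1) hcard1 ⟨x2, hx2⟩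
      (clq_erase x1 hx1)
    obtain ⟨u2, hu2⟩ := ih (n-1) (by omega) (S.erase x2) hcard2
      ⟨x1, Finset.mem_erase.mpr ⟨hx12, hx1⟩⟩ (clq_erase x2 hx2S)
    -- key adjacencies
    have hu1x2 : G.Adj u1 x2 := hu1 x2 hx2
    have hu1y : G.Adj u1 y := hu1 y (Finset.mem_erase.mpr ⟨hy1, hyS⟩)
    have hu2x1 : G.Adj u2 x1 := hu2 x1 (Finset.mem_erase.mpr ⟨hx12, hx1⟩)
    have hu2y : G.Adj u2 y := hu2 y (Finset.mem_erase.mpr ⟨hy2, hyS⟩)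
    by_cases h1 : G.Adj u1 x1
    · refine ⟨u1, fun x hx => ?_⟩
      by_cases hx' : x = x1
      · subst hx'; exact h1
      · exact hu1 x (Finset.mem_erase.mpr ⟨hx', hx⟩)
    by_cases h2' : G.Adj u2 x2
    · refine ⟨u2, fun x hx => ?_⟩
      by_cases hx' : x = x2
      · subst hx'; exact h2'
      · exact hu2 x (Finset.mem_erase.mpr ⟨hx', hx⟩)
    by_cases h12 : u1 = u2
    · refine ⟨u1, fun x hx => ?_⟩
      by_cases hx' : x = x1
      · subst hx'; rw [h12]; exact hu2x1
      · exact hu1 x (Finset.mem_erase.mpr ⟨hx', hx⟩)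
    -- contradiction via 6-cycle
    exfalso
    obtain ⟨-, c, hx1c, hcx2⟩ := hclq x1 hx1 x2 hx2S hx12
    -- cycle x1 - u2 - y - u1 - x2 - c - x1
    have hu1x1 : u1 ≠ x1 := by
      rintro rfl
      exact noTri htri hx1c hu1x2 hcx2
    have hu2x2 : u2 ≠ x2 := by
      rintro rfl
      exact noTri htri hx1c hu2x1.symm hcx2
    have hu1c : u1 ≠ c := fun h => h1 (h ▸ hx1c.symm)
    have hu2c : u2 ≠ c := fun h => h2' (h ▸ hcx2)
    have hcy : c ≠ y := by
      rintro rfl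
      exact noTri htri hu1y hu1x2 hcx2
    exact noSix hsix hu2x1.symm hu2y hu1y.symm hu1x2 hcx2.symm hx1c.symm
      (Ne.symm hy1) (fun h => hu1x1 h.symm) hx12 (Ne.symm h12) hu2x2 hu2c hy2 (Ne.symm hcy) hu1c

lemma mem_autPi {V : Type*} [Fintype V] {G : SimpleGraph V} {π : Equiv.Perm V} :
    π ∈ autPi G ↔ ∀ v, ∃ w, ⇑π '' G.neighborSet v = G.neighborSet w := Iff.rfl

lemma mem_autG {V : Type*} [Fintype V] {G : SimpleGraph V} {π : Equiv.Perm V} :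
    π ∈ autG G ↔ ∀ v w, G.Adj (π v) (π w) ↔ G.Adj v w := Iff.rfl

lemma autPi_map {V : Type*} [Fintype V] {G : SimpleGraph V} {π : Equiv.Perm V}
    (hπ : π ∈ autPi G) {v w : V} (h : (square G).Adj v w) :
    (square G).Adj (π v) (π w) := by
  obtain ⟨hne, u, hvu, huw⟩ := h
  obtain ⟨u', hu'⟩ := hπ u
  have h1 : π v ∈ G.neighborSet u' := hu' ▸ Set.mem_image_of_mem _ hvu.symm
  have h2 : π w ∈ G.neighborSet u' := hu' ▸ Set.mem_image_of_mem _ huw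
  exact ⟨fun he => hne (π.injective he), u', h1.symm, h2⟩

/-- main -/
theorem stmt_9 {V : Type*} [Fintype V] (G : SimpleGraph V) (hred : Reduced G)
    (htri : G.CliqueFree 3)
    (hsix : ¬ ∃ (v : V) (c : G.Walk v v), c.IsCycle ∧ c.length = 6)
    (hsub : ∀ u v : V, ¬ G.neighborSet u ⊂ G.neighborSet v) :
    autPi G = autG (square G) := by
  classical
  ext π
  rw [mem_autPi, mem_autG]
  constructor
  · intro hπ v w
    constructor
    · intro h
      have h' := autPi_map ((autPi G).inv_mem hπ) h
      simpa using h'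
    · exact autPi_map hπ
  · intro hπ v
    by_cases hNv : G.neighborSet v = ∅
    · exact ⟨v, by simp [hNv]⟩
    have hNv' : (G.neighborSet v).Nonempty := Set.nonempty_iff_ne_empty.mpr hNv
    have hiso : ∀ x : V, ∃ y, G.Adj x y := by
      intro x
      by_contra hx
      push_neg at hx
      have hxe : G.neighborSet x = ∅ := by
        ext y; simp [hx y]
      exact hsub x v (by rw [hxe]; exact Set.empty_ssubset.mpr hNv')
    -- the image of N(v) is a clique in the square
    have himg_clq : ∀ a ∈ ⇑π '' G.neighborSet v, ∀ b ∈ ⇑π '' G.neighborSet v,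
        a ≠ b → (square G).Adj a b := by
      rintro a ⟨x, hx, rfl⟩ b ⟨y, hy, rfl⟩ hab
      have hxy : x ≠ y := fun h => hab (by rw [h])
      exact (hπ x y).mpr ⟨hxy, v, hx.symm, hy⟩
    -- Helly: find w with π '' N(v) ⊆ N(w)
    obtain ⟨pvx, hpvx⟩ := hNv'
    have hfin1 : (⇑π '' G.neighborSet v).Finite := Set.toFinite _
    obtain ⟨w, hw⟩ := helly G htri hsix hiso hfin1.toFinset.card hfin1.toFinset rfl
      (by rw [Set.Finite.toFinset_nonempty]; exact Set.Nonempty.image _ ⟨pvx, hpvx⟩)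
      (by intro x hx y hy hxy
          exact himg_clq x (hfin1.mem_toFinset.mp hx) y (hfin1.mem_toFinset.mp hy) hxy)
    have hw' : ⇑π '' G.neighborSet v ⊆ G.neighborSet w := by
      intro a ha
      exact hw a (hfin1.mem_toFinset.mpr ha)
    -- now pull back N(w)
    have hNw : (G.neighborSet w).Nonempty := ⟨π pvx, hw' (Set.mem_image_of_mem _ hpvx)⟩
    have hpre_clq : ∀ a ∈ ⇑π.symm '' G.neighborSet w, ∀ b ∈ ⇑π.symm '' G.neighborSet w,
        a ≠ b → (square G).Adj a b := by
      rintro a ⟨x, hx, rfl⟩ b ⟨y, hy, rfl⟩ hab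
      have hxy : x ≠ y := fun h => hab (by rw [h])
      have := (hπ (π.symm x) (π.symm y)).mp (by
        simp only [Equiv.apply_symm_apply]
        exact ⟨hxy, w, hx.symm, hy⟩)
      exact this
    have hfin2 : (⇑π.symm '' G.neighborSet w).Finite := Set.toFinite _
    obtain ⟨v', hv'⟩ := helly G htri hsix hiso hfin2.toFinset.card hfin2.toFinset rfl
      (by rw [Set.Finite.toFinset_nonempty]; exact hNw.image _)
      (by intro x hx y hy hxy
          exact hpre_clq x (hfin2.mem_toFinset.mp hx) y (hfin2.mem_toFinset.mp hy) hxy)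
    have hv'' : ⇑π.symm '' G.neighborSet w ⊆ G.neighborSet v' := fun a ha =>
      hv' a (hfin2.mem_toFinset.mpr ha)
    have hsub1 : G.neighborSet v ⊆ ⇑π.symm '' G.neighborSet w := by
      intro x hx
      exact ⟨π x, hw' (Set.mem_image_of_mem _ hx), π.symm_apply_apply x⟩
    have hvv' : G.neighborSet v ⊆ G.neighborSet v' := hsub1.trans hv''
    have heq : G.neighborSet v = G.neighborSet v' := by
      by_contra hne
      exact hsub v v' ⟨hvv', fun h => hne (le_antisymm hvv' h)⟩
    have hTeq : ⇑π.symm '' G.neighborSet w = G.neighborSet v := by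
      apply le_antisymm
      · rw [heq]; exact hv''
      · exact hsub1
    refine ⟨w, ?_⟩
    rw [← hTeq, ← Set.image_comp]
    simp
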